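/- Let p, q ≥ 5 be two distinct primes. Then there is no circulant complex Hadamard matrix of order p+q all of whose entries are pq-th roots of unity. -/

import Mathlib

set_option linter.unusedSectionVars false
set_option maxHeartbeats 1000000

open Complex Matrix Polynomial Finset Submodule Module


section StructureLemma

variable {p q : ℕ} [NeZero p] [NeZero q] (hp : p.Prime) (hq : q.Prime) (hpq : p ≠ q) {ζ : ℂ}
  (hζ : IsPrimitiveRoot ζ (p * q))

noncomputable def rootEV (p q : ℕ) (ζ : ℂ) (x : ZMod p × ZMod q) : ℂ :=
  ζ ^ (q * x.1.val + p * x.2.val)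

/-- the row/column indicator functions -/
def rcInd (p q : ℕ) : ZMod q ⊕ ZMod p → (ZMod p × ZMod q → ℚ)
  | .inl j => fun x => if x.2 = j then 1 else 0
  | .inr i => fun x => if x.1 = i then 1 else 0

section aux
include hp hq hζ

lemma sum_zmod_pow_p : ∑ i : ZMod p, (ζ ^ q) ^ (i.val) = 0 := by
  have hζp : IsPrimitiveRoot (ζ ^ q) p :=
    hζ.pow (Nat.mul_pos hp.pos hq.pos) (mul_comm p q)
  have : ∑ i ∈ range p, (ζ ^ q) ^ i = 0 := hζp.geom_sum_eq_zero hp.one_lt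
  rw [← this]
  exact Finset.sum_nbij' (fun a => a.val) (fun a => (a : ZMod p))
    (fun a _ => mem_range.mpr (ZMod.val_lt a)) (fun a _ => mem_univ _)
    (fun a _ => ZMod.natCast_zmod_val a) (fun a ha => ZMod.val_natCast_of_lt (mem_range.mp ha))
    (fun a _ => rfl)

lemma sum_zmod_pow_q : ∑ j : ZMod q, (ζ ^ p) ^ (j.val) = 0 := by
  have hζq : IsPrimitiveRoot (ζ ^ p) q :=
    hζ.pow (Nat.mul_pos hp.pos hq.pos) rfl
  have : ∑ j ∈ range q, (ζ ^ p) ^ j = 0 := hζq.geom_sum_eq_zero hq.one_lt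
  rw [← this]
  exact Finset.sum_nbij' (fun a => a.val) (fun a => (a : ZMod q))
    (fun a _ => mem_range.mpr (ZMod.val_lt a)) (fun a _ => mem_univ _)
    (fun a _ => ZMod.natCast_zmod_val a) (fun a ha => ZMod.val_natCast_of_lt (mem_range.mp ha))
    (fun a _ => rfl)


lemma zeta_pow_mod (c : ℕ) : ζ ^ c = ζ ^ (c % (p * q)) := by
  conv_lhs => rw [← Nat.div_add_mod c (p * q)]
  rw [pow_add, pow_mul, hζ.pow_eq_one, one_pow, one_mul]

lemma zeta_pow_congr {a b : ℕ} (h : a ≡ b [MOD p * q]) : ζ ^ a = ζ ^ b := by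
  rw [zeta_pow_mod hp hq hζ a, zeta_pow_mod hp hq hζ b]
  exact congrArg (ζ ^ ·) h

include hpq

lemma crt_exp (t : ℕ) :
    ζ ^ (q * ((q : ZMod p)⁻¹ * (t : ZMod p)).val + p * ((p : ZMod q)⁻¹ * (t : ZMod q)).val) =
      ζ ^ t := by
  have hcop : Nat.Coprime p q := (Nat.coprime_primes hp hq).mpr hpq
  apply zeta_pow_congr hp hq hζ
  apply (Nat.modEq_and_modEq_iff_modEq_mul hcop).mp
  constructor
  · apply (ZMod.natCast_eq_natCast_iff _ _ _).mp
    push_cast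
    rw [ZMod.natCast_self, zero_mul, add_zero,
      ZMod.natCast_zmod_val, ← mul_assoc, ZMod.coe_mul_inv_eq_one q hcop.symm, one_mul]
  · apply (ZMod.natCast_eq_natCast_iff _ _ _).mp
    push_cast
    rw [ZMod.natCast_self, zero_mul, zero_add,
      ZMod.natCast_zmod_val, ← mul_assoc, ZMod.coe_mul_inv_eq_one p hcop, one_mul]

/-- The kernel of evaluation is spanned by the row/column indicators. -/
lemma mem_span_rcInd (w : ZMod p × ZMod q → ℚ)
    (hw : ∑ x : ZMod p × ZMod q, w x • rootEV p q ζ x = 0) :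
    w ∈ span ℚ (Set.range (rcInd p q)) := by
  classical
  set T : ((ZMod p × ZMod q) → ℚ) →ₗ[ℚ] ℂ := Fintype.linearCombination ℚ (rootEV p q ζ) with hT
  have hNpos : 0 < p * q := Nat.mul_pos hp.pos hq.pos
  have hp1 : 1 ≤ p := hp.pos
  have hq1 : 1 ≤ q := hq.pos
  have hcop : Nat.Coprime p q := (Nat.coprime_primes hp hq).mpr hpq
  have hint : IsIntegral ℚ ζ := (hζ.isIntegral hNpos).tower_top
  have hrange : LinearMap.range T = span ℚ (Set.range (rootEV p q ζ)) :=
    Fintype.range_linearCombination ℚ _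
  have hspan_adj : span ℚ (Set.range (rootEV p q ζ)) =
      Subalgebra.toSubmodule (Algebra.adjoin ℚ {ζ}) := by
    apply le_antisymm
    · rw [span_le]
      rintro _ ⟨x, rfl⟩
      exact pow_mem (Algebra.self_mem_adjoin_singleton ℚ ζ) _
    · rintro z hz
      rw [Algebra.adjoin_singleton_eq_range_aeval] at hz
      rcases hz with ⟨P, hP⟩
      have hP' : (aeval ζ) P = z := hP
      rw [← hP', Polynomial.aeval_eq_sum_range]
      apply Submodule.sum_mem
      intro k _
      apply Submodule.smul_mem
      apply subset_span
      exact ⟨((q : ZMod p)⁻¹ * (k : ZMod p), (p : ZMod q)⁻¹ * (k : ZMod q)),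
        crt_exp hp hq hpq hζ k⟩
  -- rank of the range
  have hfr_range : finrank ℚ (LinearMap.range T) = (p - 1) * (q - 1) := by
    rw [hrange, hspan_adj, Subalgebra.finrank_toSubmodule,
      (Algebra.adjoin.powerBasis hint).finrank, Algebra.adjoin.powerBasis_dim,
      ← cyclotomic_eq_minpoly_rat hζ hNpos, natDegree_cyclotomic,
      Nat.totient_mul hcop, Nat.totient_prime hp, Nat.totient_prime hq]
  -- rank of the kernel
  have hdim : finrank ℚ ((ZMod p × ZMod q) → ℚ) = p * q := by
    rw [Module.finrank_pi]
    simp [ZMod.card]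
  have hrn := T.finrank_range_add_finrank_ker
  rw [hfr_range, hdim] at hrn
  have harith : (p - 1) * (q - 1) + (p + q - 1) = p * q := by
    obtain ⟨a, rfl⟩ : ∃ a, p = a + 1 := ⟨p - 1, by omega⟩
    obtain ⟨b, rfl⟩ : ∃ b, q = b + 1 := ⟨q - 1, by omega⟩
    have : (a + 1) * (b + 1) = a * b + a + b + 1 := by ring
    simp only [Nat.add_sub_cancel, this]
    omega
  have hfr_ker : finrank ℚ (LinearMap.ker T) = p + q - 1 := by omega
  -- span of indicators is inside the kernel
  have hle : span ℚ (Set.range (rcInd p q)) ≤ LinearMap.ker T := by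
    rw [span_le]
    rintro _ ⟨s, rfl⟩
    rw [SetLike.mem_coe, LinearMap.mem_ker, hT, Fintype.linearCombination_apply]
    cases s with
    | inl j =>
        have : ∀ x : ZMod p × ZMod q, rcInd p q (.inl j) x • rootEV p q ζ x =
            if x.2 = j then rootEV p q ζ x else 0 := by
          intro x
          simp only [rcInd]
          split <;> simp
        rw [Finset.sum_congr rfl fun x _ => this x]
        rw [Fintype.sum_prod_type]
        have hinner : ∀ i : ZMod p,
            (∑ j' : ZMod q, if j' = j then rootEV p q ζ (i, j') else 0) = rootEV p q ζ (i, j) := by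
          intro i
          rw [Finset.sum_ite_eq' univ j (fun j' => rootEV p q ζ (i, j'))]
          simp
        have hcond : ∀ (i : ZMod p) (j' : ZMod q),
            (if (i, j').2 = j then rootEV p q ζ (i, j') else 0)
              = if j' = j then rootEV p q ζ (i, j') else 0 := fun _ _ => rfl
        simp only [hcond]
        rw [Finset.sum_congr rfl fun i _ => hinner i]
        have : ∀ i : ZMod p, rootEV p q ζ (i, j) = (ζ ^ q) ^ i.val * (ζ ^ p) ^ j.val := by
          intro i
          rw [rootEV, pow_add, ← pow_mul, ← pow_mul]
        rw [Finset.sum_congr rfl fun i _ => this i, ← Finset.sum_mul,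
          sum_zmod_pow_p hp hq hζ, zero_mul]
    | inr i =>
        have : ∀ x : ZMod p × ZMod q, rcInd p q (.inr i) x • rootEV p q ζ x =
            if x.1 = i then rootEV p q ζ x else 0 := by
          intro x
          simp only [rcInd]
          split <;> simp
        rw [Finset.sum_congr rfl fun x _ => this x]
        rw [Fintype.sum_prod_type_right]
        have hinner : ∀ j : ZMod q,
            (∑ i' : ZMod p, if i' = i then rootEV p q ζ (i', j) else 0) = rootEV p q ζ (i, j) := by
          intro j
          rw [Finset.sum_ite_eq' univ i (fun i' => rootEV p q ζ (i', j))]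
          simp
        have hcond : ∀ (i' : ZMod p) (j : ZMod q),
            (if (i', j).1 = i then rootEV p q ζ (i', j) else 0)
              = if i' = i then rootEV p q ζ (i', j) else 0 := fun _ _ => rfl
        simp only [hcond]
        rw [Finset.sum_congr rfl fun j _ => hinner j]
        have : ∀ j : ZMod q, rootEV p q ζ (i, j) = (ζ ^ p) ^ j.val * (ζ ^ q) ^ i.val := by
          intro j
          rw [rootEV, pow_add, ← pow_mul, ← pow_mul]; ring
        rw [Finset.sum_congr rfl fun j _ => this j, ← Finset.sum_mul,
          sum_zmod_pow_q hp hq hζ, zero_mul]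
  -- independent subfamily
  set bigv : (ZMod q ⊕ {i : ZMod p // ¬ (i = 0)}) → (ZMod p × ZMod q → ℚ) :=
    fun s => match s with
      | .inl j => rcInd p q (.inl j)
      | .inr i => rcInd p q (.inr i.1) with hbigv
  have hindep : LinearIndependent ℚ bigv := by
    rw [Fintype.linearIndependent_iff]
    intro g hg
    have heval : ∀ x : ZMod p × ZMod q, ∑ s, g s * bigv s x = 0 := by
      intro x
      have := congrFun hg x
      rw [Finset.sum_apply] at this
      simpa using this
    have hinl : ∀ j : ZMod q, g (.inl j) = 0 := by
      intro j
      have := heval (0, j)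
      rw [Fintype.sum_sum_type] at this
      simp only [hbigv, rcInd] at this
      have hz : ∀ x : {i : ZMod p // ¬ i = 0}, ((0:ZMod p) = ↑x) = False :=
        fun x => eq_false (fun h => x.2 h.symm)
      simpa [hz] using this
    rintro (j | i)
    · exact hinl j
    · have := heval (i.1, 0)
      rw [Fintype.sum_sum_type] at this
      simp only [hbigv, rcInd] at this
      simp only [hinl, zero_mul, Finset.sum_const_zero, zero_add] at this
      rw [Finset.sum_congr rfl (fun i' _ => show
          (g (.inr i') * if i.1 = i'.1 then (1:ℚ) else 0) =
            if i' = i then g (.inr i') else 0 by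
          rcases eq_or_ne i' i with h | h
          · subst h; simp
          · rw [if_neg h, if_neg (fun hc => h (Subtype.ext hc.symm))]
            simp)] at this
      rw [Finset.sum_ite_eq' univ i (fun i' => g (.inr i'))] at this
      simpa using this
  have hcard : Fintype.card (ZMod q ⊕ {i : ZMod p // ¬ (i = 0)}) = q + (p - 1) := by
    rw [Fintype.card_sum, ZMod.card, Fintype.card_subtype_compl, ZMod.card,
      Fintype.card_subtype_eq]
  have hfrv : finrank ℚ (span ℚ (Set.range bigv)) = q + (p - 1) := by
    rw [finrank_span_eq_card hindep, hcard]
  have hsub : span ℚ (Set.range bigv) ≤ span ℚ (Set.range (rcInd p q)) := by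
    rw [span_le]
    rintro _ ⟨s, rfl⟩
    apply subset_span
    cases s with
    | inl j => exact ⟨.inl j, rfl⟩
    | inr i => exact ⟨.inr i.1, rfl⟩
  have hfr_ge : p + q - 1 ≤ finrank ℚ (span ℚ (Set.range (rcInd p q))) := by
    have := Submodule.finrank_mono hsub
    rw [hfrv] at this
    omega
  have hker_eq : span ℚ (Set.range (rcInd p q)) = LinearMap.ker T :=
    Submodule.eq_of_le_of_finrank_le hle (by omega)
  rw [hker_eq, LinearMap.mem_ker, hT, Fintype.linearCombination_apply]
  exact hw

end aux
end StructureLemma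

lemma sum_eq_one_indicator {α : Type*} [Fintype α] [DecidableEq α] (f : α → ℕ)
    (h : ∑ a, f a = 1) : ∃ a0, ∀ a, f a = if a = a0 then 1 else 0 := by
  obtain ⟨a0, -, ha0⟩ := Finset.exists_ne_zero_of_sum_ne_zero (h ▸ one_ne_zero)
  have h1 : f a0 + ∑ a ∈ Finset.univ.erase a0, f a = 1 := by
    rw [Finset.add_sum_erase _ f (mem_univ a0)]; exact h
  have hrest : ∑ a ∈ Finset.univ.erase a0, f a = 0 := by omega
  refine ⟨a0, fun a => ?_⟩
  rcases eq_or_ne a a0 with rfl | hne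
  · rw [if_pos rfl]; omega
  · rw [if_neg hne]
    exact (Finset.sum_eq_zero_iff.mp hrest) a (Finset.mem_erase.mpr ⟨hne, mem_univ a⟩)

section Vanishing

variable {p q : ℕ} [NeZero p] [NeZero q] (hp : p.Prime) (hq : q.Prime) (hpq : p ≠ q) {ζ : ℂ}
  (hζ : IsPrimitiveRoot ζ (p * q))

include hp hq hpq hζ

/-- structure of vanishing sums of p+q many pq-th roots of unity -/
lemma vanishing_structure (c : ZMod p × ZMod q → ℕ)
    (hsum : ∑ x : ZMod p × ZMod q, c x = p + q)
    (hv : ∑ x : ZMod p × ZMod q, (c x : ℂ) * rootEV p q ζ x = 0) :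
    ∃ i0 j0, ∀ x : ZMod p × ZMod q,
      c x = (if x.1 = i0 then 1 else 0) + (if x.2 = j0 then 1 else 0) := by
  classical
  have hp2 : 2 ≤ p := hp.two_le
  have hq2 : 2 ≤ q := hq.two_le
  -- membership in the kernel span
  have hw : ∑ x : ZMod p × ZMod q, (fun x => (c x : ℚ)) x • rootEV p q ζ x = 0 := by
    rw [← hv]
    apply Finset.sum_congr rfl
    intro x _
    rw [Rat.smul_def]
    norm_num
  have hmem := mem_span_rcInd hp hq hpq hζ _ hw
  rw [mem_span_range_iff_exists_fun] at hmem
  obtain ⟨co, hco⟩ := hmem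
  have key : ∀ x : ZMod p × ZMod q, (c x : ℚ) = co (.inl x.2) + co (.inr x.1) := by
    intro x
    have := congrFun hco x
    rw [Finset.sum_apply] at this
    rw [Fintype.sum_sum_type] at this
    have e1 : ∀ j' : ZMod q, (co (Sum.inl j') • rcInd p q (.inl j')) x
        = if j' = x.2 then co (.inl j') else 0 := by
      intro j'
      simp only [rcInd, Pi.smul_apply, smul_eq_mul]
      rcases eq_or_ne j' x.2 with h | h
      · simp [h]
      · rw [if_neg h, if_neg (Ne.symm h), mul_zero]
    have e2 : ∀ i' : ZMod p, (co (Sum.inr i') • rcInd p q (.inr i')) x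
        = if i' = x.1 then co (.inr i') else 0 := by
      intro i'
      simp only [rcInd, Pi.smul_apply, smul_eq_mul]
      rcases eq_or_ne i' x.1 with h | h
      · simp [h]
      · rw [if_neg h, if_neg (Ne.symm h), mul_zero]
    rw [Finset.sum_congr rfl fun j' _ => e1 j', Finset.sum_congr rfl fun i' _ => e2 i',
      Finset.sum_ite_eq' Finset.univ x.2 (fun j' => co (.inl j')),
      Finset.sum_ite_eq' Finset.univ x.1 (fun i' => co (.inr i'))] at this
    simp only [mem_univ, if_true] at this
    exact this.symm
  -- the exchange relation, over ℕ
  have hR : ∀ (i i' : ZMod p) (j j' : ZMod q),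
      c (i, j) + c (i', j') = c (i', j) + c (i, j') := by
    intro i i' j j'
    have : ((c (i, j) + c (i', j') : ℕ) : ℚ) = ((c (i', j) + c (i, j') : ℕ) : ℚ) := by
      push_cast
      rw [key (i, j), key (i', j'), key (i', j), key (i, j')]
      ring
    exact_mod_cast this
  -- minimizer
  obtain ⟨i1, -, hmin⟩ := Finset.exists_min_image Finset.univ (fun i => c (i, 0))
    ⟨0, mem_univ 0⟩
  set E : ZMod p → ℕ := fun i => c (i, 0) - c (i1, 0) with hE
  set F : ZMod q → ℕ := fun j => c (i1, j) with hF
  have hEF : ∀ i j, c (i, j) = E i + F j := by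
    intro i j
    have h1 := hR i i1 j 0
    have h2 := hmin i (mem_univ i)
    simp only [hE, hF]
    omega
  set SE := ∑ i : ZMod p, E i with hSE
  set SF := ∑ j : ZMod q, F j with hSF
  have htotal : q * SE + p * SF = p + q := by
    rw [← hsum, Fintype.sum_prod_type]
    rw [Finset.sum_congr rfl fun i _ => Finset.sum_congr rfl fun j _ => hEF i j]
    simp only [Finset.sum_add_distrib, Finset.sum_const, Finset.card_univ, ZMod.card,
      smul_eq_mul]
    rw [← Finset.mul_sum, ← hSE, ← hSF]
  -- solve q * SE + p * SF = p + q
  have hSF1 : SF = 1 := by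
    have hint : (q:ℤ) * SE + p * SF = p + q := by exact_mod_cast htotal
    have hdvd : (q:ℤ) ∣ (p:ℤ) * ((SF:ℤ) - 1) := ⟨1 - (SE:ℤ), by linarith⟩
    have hcop : IsCoprime (q:ℤ) (p:ℤ) :=
      Nat.Coprime.isCoprime ((Nat.coprime_primes hq hp).mpr (Ne.symm hpq))
    have hdvd2 : (q:ℤ) ∣ (SF:ℤ) - 1 := hcop.dvd_of_dvd_mul_left hdvd
    by_contra hne
    rcases Nat.lt_or_ge SF 1 with h0 | h2
    · have hSF0 : SF = 0 := by omega
      rw [hSF0] at hdvd2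
      have hq1 : (q:ℤ) ∣ 1 := by
        rw [dvd_neg.symm]
        simpa using hdvd2
      have := Int.le_of_dvd one_pos hq1
      omega
    · have h2' : 2 ≤ SF := by omega
      have hpos : (0:ℤ) < (SF:ℤ) - 1 := by
        have : (2:ℤ) ≤ (SF:ℤ) := by exact_mod_cast h2'
        linarith
      have hle := Int.le_of_dvd hpos hdvd2
      have hge : q + 1 ≤ SF := by omega
      have h3 : p * q + p ≤ p * SF := by
        calc p * q + p = p * (q + 1) := by ring
        _ ≤ p * SF := Nat.mul_le_mul_left p hge
      have h4 : 2 * q ≤ p * q := Nat.mul_le_mul_right q hp2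
      omega
  have hSE1 : SE = 1 := by
    rw [hSF1, mul_one] at htotal
    have : q * SE = q * 1 := by omega
    exact Nat.eq_of_mul_eq_mul_left hq.pos this
  have hSEsum : ∑ i : ZMod p, E i = 1 := by rw [← hSE]; exact hSE1
  have hSFsum : ∑ j : ZMod q, F j = 1 := by rw [← hSF]; exact hSF1
  obtain ⟨i0, hi0⟩ := sum_eq_one_indicator E hSEsum
  obtain ⟨j0, hj0⟩ := sum_eq_one_indicator F hSFsum
  refine ⟨i0, j0, fun x => ?_⟩
  have hx := hEF x.1 x.2
  rw [Prod.mk.eta] at hx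
  rw [hx, hi0, hj0]

end Vanishing

lemma sum_univ_zmod_eq_zero {p : ℕ} [NeZero p] (hp : p.Prime) (hp2 : p ≠ 2) :
    ∑ i : ZMod p, i = 0 := by
  haveI := Fact.mk hp
  have hneg : ∑ i : ZMod p, -i = ∑ i : ZMod p, i := Equiv.sum_comp (Equiv.neg (ZMod p)) id
  have hS : ∑ i : ZMod p, i = -∑ i : ZMod p, i := by
    rw [← Finset.sum_neg_distrib, hneg]
  have h2 : (2 : ZMod p) * ∑ i : ZMod p, i = 0 := by
    rw [two_mul]
    nth_rewrite 1 [hS]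
    rw [neg_add_cancel]
  have h2ne : (2 : ZMod p) ≠ 0 := by
    intro h
    have : ((2 : ℕ) : ZMod p) = 0 := by exact_mod_cast h
    have hdvd := (ZMod.natCast_eq_zero_iff 2 p).mp this
    have hle := Nat.le_of_dvd (by norm_num) hdvd
    have := hp.two_le
    omega
  rcases mul_eq_zero.mp h2 with h | h
  · exact absurd h h2ne
  · exact h


/-- A complex Hadamard matrix: unimodular entries and pairwise orthogonal rows. -/
def IsHadamard {n : ℕ} [NeZero n] (H : Matrix (ZMod n) (ZMod n) ℂ) : Prop :=
  (∀ i j, ‖H i j‖ = 1) ∧ H * Hᴴ = (n : ℂ) • 1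

/-- For distinct primes `p, q ≥ 5` there is no circulant complex Hadamard matrix of
order `p+q` all of whose entries are `pq`-th roots of unity. -/
theorem no_circulant_butson_p_plus_q
    (p q : ℕ) (hp : p.Prime) (hq : q.Prime) (hp5 : 5 ≤ p) (hq5 : 5 ≤ q) (hpq : p ≠ q)
    [NeZero (p + q)] :
    ¬ ∃ H : Matrix (ZMod (p + q)) (ZMod (p + q)) ℂ,
        (∃ ξ : ZMod (p + q) → ℂ, ∀ i j, H i j = ξ (j - i)) ∧
        _root_.IsHadamard H ∧
        (∀ i j, (H i j) ^ (p * q) = 1) := by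
  classical
  haveI : NeZero p := ⟨hp.ne_zero⟩
  haveI := Fact.mk hp
  haveI := Fact.mk hq
  haveI : NeZero q := ⟨hq.ne_zero⟩
  haveI : NeZero (p * q) := ⟨Nat.mul_ne_zero hp.ne_zero hq.ne_zero⟩
  haveI : Fact (1 < q) := ⟨by omega⟩
  haveI : Fact (1 < p) := ⟨by omega⟩
  rintro ⟨H, ⟨ξ, hHξ⟩, ⟨-, horth⟩, hroots⟩
  set ζ : ℂ := Complex.exp (2 * Real.pi * Complex.I / (p * q : ℕ)) with hζdef
  have hζ : IsPrimitiveRoot ζ (p * q) := Complex.isPrimitiveRoot_exp _ (NeZero.ne _)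
  -- entries as powers of ζ
  have hξpow : ∀ m : ZMod (p + q), (ξ m) ^ (p * q) = 1 := by
    intro m
    have := hroots 0 m
    rwa [hHξ 0 m, sub_zero] at this
  have hex : ∀ m : ZMod (p + q), ∃ a : ℕ, ζ ^ a = ξ m := by
    intro m
    obtain ⟨i, -, hi⟩ := hζ.eq_pow_of_pow_eq_one (hξpow m)
    exact ⟨i, hi⟩
  choose a ha using hex
  set A : ZMod (p + q) → ZMod (p * q) := fun m => (a m : ZMod (p * q)) with hA
  have hζA : ∀ m, ζ ^ (A m).val = ξ m := by
    intro m
    rw [hA, ZMod.val_natCast, ← zeta_pow_mod hp hq hζ]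
    exact ha m
  have hadd : ∀ s t : ZMod (p * q), ζ ^ (s + t).val = ζ ^ s.val * ζ ^ t.val := by
    intro s t
    rw [← pow_add, ZMod.val_add, ← zeta_pow_mod hp hq hζ]
  have habs1 : ∀ v : ℕ, ‖ζ ^ v‖ = 1 := by
    intro v
    rw [norm_pow]
    have h0 : (2 * (Real.pi : ℂ) * Complex.I / ((p * q : ℕ) : ℂ))
        = ((2 * Real.pi / (p * q : ℕ) : ℝ) : ℂ) * Complex.I := by
      push_cast
      ring
    have : ‖ζ‖ = 1 := by
      rw [hζdef, h0, Complex.norm_exp_ofReal_mul_I]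
    rw [this, one_pow]
  have hconj : ∀ t : ZMod (p * q), (starRingEnd ℂ) (ζ ^ t.val) = ζ ^ (-t).val := by
    intro t
    have hmul : ζ ^ t.val * ζ ^ (-t).val = 1 := by
      rw [← hadd, add_neg_cancel, ZMod.val_zero, pow_zero]
    have hinv : ζ ^ (-t).val = (ζ ^ t.val)⁻¹ :=
      eq_inv_of_mul_eq_one_left (by rwa [mul_comm] at hmul)
    rw [← Complex.inv_eq_conj (habs1 _), hinv]
  -- CRT coordinates
  set φp : ZMod (p * q) →+* ZMod p := ZMod.castHom (Dvd.intro q rfl) (ZMod p) with hφp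
  set φq : ZMod (p * q) →+* ZMod q := ZMod.castHom (Dvd.intro_left p rfl) (ZMod q) with hφq
  set Bc : ZMod (p * q) → ZMod p := fun t => (q : ZMod p)⁻¹ * φp t with hBc
  set Cc : ZMod (p * q) → ZMod q := fun t => (p : ZMod q)⁻¹ * φq t with hCc
  have hφpv : ∀ t : ZMod (p * q), φp t = ((t.val : ℕ) : ZMod p) := by
    intro t
    rw [hφp, ZMod.castHom_apply, ← ZMod.natCast_val]
  have hφqv : ∀ t : ZMod (p * q), φq t = ((t.val : ℕ) : ZMod q) := by
    intro t
    rw [hφq, ZMod.castHom_apply, ← ZMod.natCast_val]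
  have hevA : ∀ t : ZMod (p * q), rootEV p q ζ (Bc t, Cc t) = ζ ^ t.val := by
    intro t
    show ζ ^ (q * (Bc t).val + p * (Cc t).val) = ζ ^ t.val
    rw [hBc, hCc]
    simp only [hφpv, hφqv]
    exact crt_exp hp hq hpq hζ t.val
  have hBsub : ∀ s t, Bc (s - t) = Bc s - Bc t := by
    intro s t
    simp only [hBc, map_sub, mul_sub]
  have hCsub : ∀ s t, Cc (s - t) = Cc s - Cc t := by
    intro s t
    simp only [hCc, map_sub, mul_sub]
  set B' : ZMod (p + q) → ZMod p := fun k => Bc (A k) with hB'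
  set C' : ZMod (p + q) → ZMod q := fun k => Cc (A k) with hC'
  -- the key structural fact for every shift d ≠ 0
  have main : ∀ d : ZMod (p + q), d ≠ 0 →
      (∀ k, B' (k - d) = B' k ∨ C' (k - d) = C' k) ∧
      (∃ k, C' (k - d) ≠ C' k) ∧ (∃ k, B' (k - d) ≠ B' k) := by
    intro d hd
    -- orthogonality for shift d
    have horth_d : ∑ k : ZMod (p + q), ξ (k - d) * (starRingEnd ℂ) (ξ k) = 0 := by
      have h1 := congrFun (congrFun horth d) 0
      rw [Matrix.mul_apply] at h1
      have h2 : (((p + q : ℕ) : ℂ) • (1 : Matrix (ZMod (p + q)) (ZMod (p + q)) ℂ)) d 0 = 0 := by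
        rw [Matrix.smul_apply, Matrix.one_apply_ne hd, smul_zero]
      rw [h2] at h1
      rw [← h1]
      apply Finset.sum_congr rfl
      intro k _
      rw [Matrix.conjTranspose_apply, hHξ d k, hHξ 0 k, sub_zero]
      rfl
    set g : ZMod (p + q) → ZMod p × ZMod q :=
      fun k => (Bc (A (k - d) - A k), Cc (A (k - d) - A k)) with hg
    have hterm : ∀ k, ξ (k - d) * (starRingEnd ℂ) (ξ k) = rootEV p q ζ (g k) := by
      intro k
      rw [← hζA, ← hζA, hconj, ← hadd, ← sub_eq_add_neg, hg]
      exact (hevA _).symm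
    set c : ZMod p × ZMod q → ℕ :=
      fun x => (Finset.univ.filter (fun k => g k = x)).card with hc
    have hcsum : ∑ x : ZMod p × ZMod q, c x = p + q := by
      have h0 := (Finset.card_eq_sum_card_fiberwise
        (f := g) (s := Finset.univ) (t := Finset.univ) (fun x _ => mem_univ _)).symm
      rw [Finset.card_univ, ZMod.card] at h0
      exact h0
    have hv : ∑ x : ZMod p × ZMod q, (c x : ℂ) * rootEV p q ζ x = 0 := by
      have h0 := Finset.sum_fiberwise' Finset.univ g (rootEV p q ζ)
      have h1 : ∀ x : ZMod p × ZMod q,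
          (∑ k ∈ Finset.univ.filter (fun k => g k = x), rootEV p q ζ x)
            = (c x : ℂ) * rootEV p q ζ x := by
        intro x
        rw [Finset.sum_const, nsmul_eq_mul, hc]
      rw [Finset.sum_congr rfl (fun x _ => h1 x)] at h0
      rw [h0, ← horth_d]
      exact Finset.sum_congr rfl fun k _ => (hterm k).symm
    obtain ⟨i0, j0, hstruct⟩ := vanishing_structure hp hq hpq hζ c hcsum hv
    -- first coordinates sum to zero (telescoping)
    have htel1 : ∑ k : ZMod (p + q), (g k).1 = 0 := by
      have : ∀ k, (g k).1 = B' (k - d) - B' k := by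
        intro k
        rw [hg]
        exact hBsub _ _
      rw [Finset.sum_congr rfl fun k _ => this k, Finset.sum_sub_distrib]
      have hcomp := Equiv.sum_comp (Equiv.subRight d) B'
      simp only [Equiv.subRight_apply] at hcomp
      rw [hcomp, sub_self]
    have htel2 : ∑ k : ZMod (p + q), (g k).2 = 0 := by
      have : ∀ k, (g k).2 = C' (k - d) - C' k := by
        intro k
        rw [hg]
        exact hCsub _ _
      rw [Finset.sum_congr rfl fun k _ => this k, Finset.sum_sub_distrib]
      have hcomp := Equiv.sum_comp (Equiv.subRight d) C'
      simp only [Equiv.subRight_apply] at hcomp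
      rw [hcomp, sub_self]
    -- fiberwise computation of the coordinate sums
    have hfib1 : ∑ k : ZMod (p + q), (g k).1 = ∑ x : ZMod p × ZMod q, c x • x.1 := by
      have h0 := Finset.sum_fiberwise' Finset.univ g (fun x => x.1)
      rw [← h0]
      apply Finset.sum_congr rfl
      intro x _
      rw [Finset.sum_const, hc]
    have hfib2 : ∑ k : ZMod (p + q), (g k).2 = ∑ x : ZMod p × ZMod q, c x • x.2 := by
      have h0 := Finset.sum_fiberwise' Finset.univ g (fun x => x.2)
      rw [← h0]
      apply Finset.sum_congr rfl
      intro x _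
      rw [Finset.sum_const, hc]
    -- evaluate the fiberwise sums using the structure
    have hzp : ∑ i : ZMod p, i = 0 := sum_univ_zmod_eq_zero hp (by omega)
    have hzq : ∑ j : ZMod q, j = 0 := sum_univ_zmod_eq_zero hq (by omega)
    have hi0 : i0 = 0 := by
      have h0 : ∑ x : ZMod p × ZMod q, c x • x.1 = 0 := by rw [← hfib1, htel1]
      have hrw : ∀ x : ZMod p × ZMod q, c x • x.1
          = (if x.1 = i0 then x.1 else 0) + (if x.2 = j0 then x.1 else 0) := by
        intro x
        rw [hstruct x, add_smul]
        congr 1 <;> split <;> simp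
      rw [Finset.sum_congr rfl (fun x _ => hrw x), Finset.sum_add_distrib] at h0
      have e1 : ∑ x : ZMod p × ZMod q, (if x.1 = i0 then x.1 else 0) = q • i0 := by
        rw [Fintype.sum_prod_type]
        have hred : ∀ (i : ZMod p) (j : ZMod q),
            (if (i, j).1 = i0 then (i, j).1 else 0) = if i = i0 then i else 0 := fun _ _ => rfl
        simp only [hred]
        have hconst : ∀ i : ZMod p, ∑ _j : ZMod q, (if i = i0 then i else 0)
            = q • (if i = i0 then i else 0) := by
          intro i
          rw [Finset.sum_const, Finset.card_univ, ZMod.card]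
        rw [Finset.sum_congr rfl fun i _ => hconst i, ← Finset.smul_sum,
          Finset.sum_ite_eq' Finset.univ i0 (fun i => i), if_pos (mem_univ i0)]
      have e2 : ∑ x : ZMod p × ZMod q, (if x.2 = j0 then x.1 else 0) = 0 := by
        rw [Fintype.sum_prod_type_right]
        have hred : ∀ (i : ZMod p) (j : ZMod q),
            (if (i, j).2 = j0 then (i, j).1 else 0) = if j = j0 then i else 0 := fun _ _ => rfl
        simp only [hred]
        have hinner : ∀ j : ZMod q, (∑ i : ZMod p, if j = j0 then i else 0) = 0 := by
          intro j
          split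
          · exact hzp
          · exact Finset.sum_const_zero
        rw [Finset.sum_congr rfl fun j _ => hinner j, Finset.sum_const_zero]
      rw [e1, e2, add_zero] at h0
      have hmulz : (q : ZMod p) * i0 = 0 := by rw [← nsmul_eq_mul]; exact h0
      rcases mul_eq_zero.mp hmulz with h | h
      · exfalso
        have hdvd := (ZMod.natCast_eq_zero_iff q p).mp h
        exact hpq ((Nat.prime_dvd_prime_iff_eq hp hq).mp hdvd)
      · exact h
    have hj0 : j0 = 0 := by
      have h0 : ∑ x : ZMod p × ZMod q, c x • x.2 = 0 := by rw [← hfib2, htel2]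
      have hrw : ∀ x : ZMod p × ZMod q, c x • x.2
          = (if x.1 = i0 then x.2 else 0) + (if x.2 = j0 then x.2 else 0) := by
        intro x
        rw [hstruct x, add_smul]
        congr 1 <;> split <;> simp
      rw [Finset.sum_congr rfl (fun x _ => hrw x), Finset.sum_add_distrib] at h0
      have e1 : ∑ x : ZMod p × ZMod q, (if x.2 = j0 then x.2 else 0) = p • j0 := by
        rw [Fintype.sum_prod_type_right]
        have hred : ∀ (i : ZMod p) (j : ZMod q),
            (if (i, j).2 = j0 then (i, j).2 else 0) = if j = j0 then j else 0 := fun _ _ => rfl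
        simp only [hred]
        have hconst : ∀ j : ZMod q, ∑ _i : ZMod p, (if j = j0 then j else 0)
            = p • (if j = j0 then j else 0) := by
          intro j
          rw [Finset.sum_const, Finset.card_univ, ZMod.card]
        rw [Finset.sum_congr rfl fun j _ => hconst j, ← Finset.smul_sum,
          Finset.sum_ite_eq' Finset.univ j0 (fun j => j), if_pos (mem_univ j0)]
      have e2 : ∑ x : ZMod p × ZMod q, (if x.1 = i0 then x.2 else 0) = 0 := by
        rw [Fintype.sum_prod_type]
        have hred : ∀ (i : ZMod p) (j : ZMod q),
            (if (i, j).1 = i0 then (i, j).2 else 0) = if i = i0 then j else 0 := fun _ _ => rfl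
        simp only [hred]
        have hinner : ∀ i : ZMod p, (∑ j : ZMod q, if i = i0 then j else 0) = 0 := by
          intro i
          split
          · exact hzq
          · exact Finset.sum_const_zero
        rw [Finset.sum_congr rfl fun i _ => hinner i, Finset.sum_const_zero]
      rw [e2, e1] at h0
      rw [zero_add] at h0
      have hmulz : (p : ZMod q) * j0 = 0 := by rw [← nsmul_eq_mul]; exact h0
      rcases mul_eq_zero.mp hmulz with h | h
      · exfalso
        have hdvd := (ZMod.natCast_eq_zero_iff p q).mp h
        exact hpq ((Nat.prime_dvd_prime_iff_eq hq hp).mp hdvd).symm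
      · exact h
    refine ⟨?_, ?_, ?_⟩
    · intro k
      have hk1 : 0 < c (g k) :=
        Finset.card_pos.mpr ⟨k, Finset.mem_filter.mpr ⟨mem_univ k, rfl⟩⟩
      rw [hstruct (g k), hi0, hj0] at hk1
      have hor : (g k).1 = 0 ∨ (g k).2 = 0 := by
        by_contra hcon
        push_neg at hcon
        rw [if_neg hcon.1, if_neg hcon.2] at hk1
        simp at hk1
      rcases hor with h | h
      · left
        have h' : Bc (A (k - d) - A k) = 0 := h
        rw [hBsub] at h'
        exact sub_eq_zero.mp h'
      · right
        have h' : Cc (A (k - d) - A k) = 0 := h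
        rw [hCsub] at h'
        exact sub_eq_zero.mp h'
    · have hone : c (0, 1) ≠ 0 := by
        rw [hstruct (0, 1), hi0, hj0]
        have h1 : ((0, (1 : ZMod q)).1 = (0 : ZMod p)) := rfl
        rw [if_pos h1, if_neg (show ¬((0, (1:ZMod q)).2 = 0) from one_ne_zero)]
        omega
      obtain ⟨k, hk⟩ := Finset.card_pos.mp (Nat.pos_of_ne_zero hone)
      have hgk := (Finset.mem_filter.mp hk).2
      refine ⟨k, fun heq => ?_⟩
      have h2 : Cc (A (k - d) - A k) = 1 := congrArg Prod.snd hgk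
      rw [hCsub] at h2
      have : C' (k - d) - C' k = 1 := h2
      rw [heq, sub_self] at this
      exact one_ne_zero this.symm
    · have hone : c (1, 0) ≠ 0 := by
        rw [hstruct (1, 0), hi0, hj0]
        have h1 : (((1 : ZMod p), (0 : ZMod q)).2 = (0 : ZMod q)) := rfl
        rw [if_pos h1, if_neg (show ¬(((1:ZMod p), (0:ZMod q)).1 = 0) from one_ne_zero)]
        omega
      obtain ⟨k, hk⟩ := Finset.card_pos.mp (Nat.pos_of_ne_zero hone)
      have hgk := (Finset.mem_filter.mp hk).2
      refine ⟨k, fun heq => ?_⟩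
      have h2 : Bc (A (k - d) - A k) = 1 := congrArg Prod.fst hgk
      rw [hBsub] at h2
      have : B' (k - d) - B' k = 1 := h2
      rw [heq, sub_self] at this
      exact one_ne_zero this.symm
  -- final combinatorial contradiction
  have h1ne : (1 : ZMod (p + q)) ≠ 0 := by
    haveI : Fact (1 < p + q) := ⟨by omega⟩
    exact one_ne_zero
  have pair : ∀ k k' : ZMod (p + q), k ≠ k' → B' k = B' k' ∨ C' k = C' k' := by
    intro k k' hne
    have hdne : k' - k ≠ 0 := sub_ne_zero.mpr (Ne.symm hne)
    have := (main (k' - k) hdne).1 k'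
    rwa [sub_sub_cancel] at this
  obtain ⟨-, hexC, hexB⟩ := main 1 h1ne
  obtain ⟨kb, hkb⟩ := hexB
  have hk12 : kb - 1 ≠ kb := fun h => hkb (congrArg B' h)
  have hC12 : C' (kb - 1) = C' kb := (pair _ _ hk12).resolve_left hkb
  obtain ⟨kc, hkc⟩ := hexC
  have ht : ∃ t, C' t ≠ C' (kb - 1) := by
    by_cases h3 : C' (kc - 1) = C' (kb - 1)
    · exact ⟨kc, fun h4 => hkc (h3.trans h4.symm)⟩
    · exact ⟨kc - 1, h3⟩
  obtain ⟨tt, ht1⟩ := ht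
  have ht2 : C' tt ≠ C' kb := by rwa [← hC12]
  have htk1 : tt ≠ kb - 1 := fun h => ht1 (congrArg C' h)
  have htk2 : tt ≠ kb := fun h => ht2 (congrArg C' h)
  have hB1 : B' tt = B' (kb - 1) := (pair _ _ htk1).resolve_right ht1
  have hB2 : B' tt = B' kb := (pair _ _ htk2).resolve_right ht2
  exact hkb (hB1.symm.trans hB2)
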